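/- Let d : ℕ → ℚ be defined by d(N) = Σ_{j=1}^∞ ‖N/2^j‖, where ‖x‖ denotes the distance from x to the nearest integer. Then d satisfies the recurrence d(0) = 0, d(1) = 1, d(2N) = d(N), and d(2N+1) = (d(N) + d(N+1) + 1)/2 for all N ≥ 0. -/

import Mathlib

/-- Distance from a real number to the nearest integer. -/
noncomputable def distNearestInt (x : ℝ) : ℝ := |x - (round x : ℤ)|

lemma dNI_eq (x : ℝ) : distNearestInt x = min (Int.fract x) (1 - Int.fract x) :=
  abs_sub_round_eq_min x

lemma dNI_int_add (n : ℤ) (x : ℝ) : distNearestInt (n + x) = distNearestInt x := by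
  rw [dNI_eq, dNI_eq, Int.fract_intCast_add]

lemma dNI_nonneg (x : ℝ) : 0 ≤ distNearestInt x := abs_nonneg _

lemma dNI_le_abs (x : ℝ) : distNearestInt x ≤ |x| := by
  simpa [distNearestInt] using round_le x 0

lemma summable_aux (c : ℝ) (hc : 0 ≤ c) :
    Summable (fun j : ℕ => distNearestInt (c / 2 ^ (j + 1))) := by
  have hg : Summable (fun j : ℕ => c * (1/2 : ℝ) ^ (j + 1)) := by
    have := (summable_geometric_of_lt_one (r := (1/2:ℝ)) (by norm_num) (by norm_num)).mul_left c
    exact (summable_nat_add_iff 1).mpr this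
  refine Summable.of_nonneg_of_le (fun j => dNI_nonneg _) (fun j => ?_) hg
  have := dNI_le_abs (c / 2 ^ (j + 1))
  rw [abs_of_nonneg (by positivity)] at this
  calc distNearestInt (c / 2 ^ (j+1)) ≤ c / 2 ^ (j+1) := this
    _ = c * (1/2)^(j+1) := by rw [div_eq_mul_one_div, one_div_pow]

lemma dNI_of_unit {x : ℝ} (h0 : 0 ≤ x) (h1 : x ≤ 1) :
    distNearestInt x = min x (1 - x) := by
  rcases eq_or_lt_of_le h1 with rfl | h1
  · simp [distNearestInt]
  · rw [dNI_eq, Int.fract_eq_self.mpr ⟨h0, h1⟩]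

lemma dNI_div (r m : ℕ) (h : r ≤ m) (hm : 0 < m) :
    distNearestInt ((r : ℝ) / m) = min ((r:ℝ)/m) (1 - (r:ℝ)/m) := by
  have hm' : (0:ℝ) < m := by exact_mod_cast hm
  exact dNI_of_unit (by positivity) (by rw [div_le_one hm']; exact_mod_cast h)

lemma half_le {x c : ℝ} (hc : 0 < c) (h : 2*x ≤ c) : x/c ≤ 1 - x/c := by
  rw [div_le_iff₀ hc, sub_mul, one_mul, div_mul_cancel₀ _ hc.ne']
  linarith

lemma half_ge {x c : ℝ} (hc : 0 < c) (h : c ≤ 2*x) : 1 - x/c ≤ x/c := by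
  rw [le_div_iff₀ hc, sub_mul, one_mul, div_mul_cancel₀ _ hc.ne']
  linarith

lemma odd_term (N j : ℕ) :
    distNearestInt ((2*(N:ℝ)+1) / 2^(j+2)) =
      (distNearestInt ((N:ℝ)/2^(j+1)) + distNearestInt (((N:ℝ)+1)/2^(j+1)))/2 := by
  set m : ℕ := 2^(j+1) with hm
  have hm0 : 0 < m := Nat.pow_pos (by norm_num)
  have hmr : (0:ℝ) < m := by exact_mod_cast hm0
  obtain ⟨q, r, hr, rfl⟩ : ∃ q r : ℕ, r < m ∧ N = m*q + r :=
    ⟨N / m, N % m, Nat.mod_lt _ hm0, (Nat.div_add_mod N m).symm⟩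
  have e1 : (2*((m*q+r:ℕ):ℝ)+1) / 2^(j+2) = (q:ℤ) + (2*(r:ℝ)+1)/(2*m) := by
    push_cast [hm]
    field_simp
    ring
  have e2 : ((m*q+r:ℕ):ℝ)/2^(j+1) = (q:ℤ) + (r:ℝ)/m := by
    push_cast [hm]; field_simp
  have e3 : (((m*q+r:ℕ):ℝ)+1)/2^(j+1) = (q:ℤ) + ((r:ℝ)+1)/m := by
    push_cast [hm]; field_simp; ring
  rw [e1, e2, e3, dNI_int_add, dNI_int_add, dNI_int_add]
  have h2m : (2*(r:ℝ)+1)/(2*m) = ((2*r+1:ℕ):ℝ)/((2*m:ℕ):ℝ) := by push_cast; ring_nf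
  have hr1 : ((r:ℝ)+1)/m = ((r+1:ℕ):ℝ)/((m:ℕ):ℝ) := by push_cast; ring_nf
  rw [h2m, hr1, dNI_div _ _ (by omega) (by omega), dNI_div _ _ (le_of_lt hr) hm0,
      dNI_div _ _ (by omega) hm0]
  have hme : 2 ∣ m := by rw [hm]; exact dvd_pow_self 2 (Nat.succ_ne_zero j)
  push_cast
  rcases lt_or_ge (2*r+1) m with h | h
  · have hc : 2*(r:ℝ)+1 ≤ m := by exact_mod_cast h.le
    have hc2 : 2*(r:ℝ)+2 ≤ m := by exact_mod_cast (by omega : 2*r+2 ≤ m)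
    have hA := half_le (x := 2*(r:ℝ)+1) (c := 2*(m:ℝ)) (by positivity) (by linarith)
    have hB := half_le (x := (r:ℝ)) hmr (by linarith)
    have hC := half_le (x := (r:ℝ)+1) hmr (by linarith)
    rw [min_eq_left hA, min_eq_left hB, min_eq_left hC]
    field_simp
    ring
  · have h' : m < 2*r+1 := by omega
    have hc : (m:ℝ) ≤ 2*r := by exact_mod_cast (by omega : m ≤ 2*r)
    have hA := half_ge (x := 2*(r:ℝ)+1) (c := 2*(m:ℝ)) (by positivity) (by linarith)
    have hB := half_ge (x := (r:ℝ)) hmr (by linarith)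
    have hC := half_ge (x := (r:ℝ)+1) hmr (by linarith)
    rw [min_eq_right hA, min_eq_right hB, min_eq_right hC]
    field_simp
    ring

lemma dNI_nat (n : ℕ) : distNearestInt (n : ℝ) = 0 := by
  have : ((n:ℝ)) = ((n:ℤ):ℝ) + 0 := by push_cast; ring
  rw [this, dNI_int_add, dNI_eq]
  norm_num

/-- `d N = ∑_{j=1}^∞ ‖N/2^j‖`. -/
noncomputable def dVdC (N : ℕ) : ℝ := ∑' j : ℕ, distNearestInt ((N : ℝ) / 2 ^ (j + 1))

theorem vdc_recurrence :
    dVdC 0 = 0 ∧ dVdC 1 = 1 ∧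
    (∀ N : ℕ, dVdC (2 * N) = dVdC N) ∧
    (∀ N : ℕ, dVdC (2 * N + 1) = (dVdC N + dVdC (N + 1) + 1) / 2) := by
  have hsum : ∀ N : ℕ, Summable (fun j : ℕ => distNearestInt ((N : ℝ) / 2 ^ (j + 1))) :=
    fun N => summable_aux N (Nat.cast_nonneg N)
  refine ⟨?_, ?_, ?_, ?_⟩
  · simp [dVdC, distNearestInt]
  · have : ∀ j : ℕ, distNearestInt ((1:ℝ) / 2 ^ (j + 1)) = (1:ℝ) / 2 ^ (j+1) := by
      intro j
      have h1 : ((1:ℕ):ℝ)/((2^(j+1):ℕ):ℝ) = (1:ℝ)/2^(j+1) := by push_cast; ring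
      have := dNI_div 1 (2^(j+1)) (Nat.one_le_two_pow) (by positivity)
      rw [h1] at this
      rw [this, min_eq_left]
      have h2 : (2:ℝ) ≤ 2^(j+1) := by
        calc (2:ℝ) = 2^1 := by norm_num
        _ ≤ 2^(j+1) := pow_le_pow_right₀ (by norm_num) (by omega)
      rw [div_le_iff₀ (by positivity), sub_mul, one_mul, div_mul_cancel₀]
      · linarith
      · positivity
    simp only [dVdC, Nat.cast_one]
    rw [tsum_congr this]
    have h3 : ∀ j : ℕ, (1:ℝ)/2^(j+1) = 1/2/2^j := by
      intro j; rw [pow_succ, div_div]; ring_nf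
    rw [tsum_congr h3]
    exact tsum_geometric_two' 1
  · intro N
    have hterm : ∀ j : ℕ, distNearestInt (((2*N : ℕ) : ℝ) / 2 ^ (j + 1))
        = distNearestInt ((N:ℝ) / 2^j) := by
      intro j
      congr 1
      push_cast
      rw [pow_succ]
      field_simp
    unfold dVdC
    rw [tsum_congr hterm, Summable.tsum_eq_zero_add]
    · simp [dNI_nat]
    · have := hsum N
      exact (summable_nat_add_iff 1).mp (by simpa [pow_succ] using this)
  · intro N
    have hterm : ∀ j : ℕ, distNearestInt (((2*N+1 : ℕ) : ℝ) / 2 ^ (j + 1))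
        = distNearestInt ((2*(N:ℝ)+1) / 2^(j+1)) := by
      intro j; congr 1; push_cast; ring
    unfold dVdC
    rw [tsum_congr hterm, Summable.tsum_eq_zero_add]
    · have h0 : distNearestInt ((2*(N:ℝ)+1)/2^(0+1)) = 1/2 := by
        have : (2*(N:ℝ)+1)/2^(0+1) = ((N:ℤ):ℝ) + 1/2 := by push_cast; ring
        rw [this, dNI_int_add, dNI_eq, Int.fract_eq_self.mpr (by norm_num)]
        norm_num
      have h1 : ∀ j : ℕ, distNearestInt ((2*(N:ℝ)+1)/2^(j+1+1)) =
          (distNearestInt ((N:ℝ)/2^(j+1)) + distNearestInt (((N:ℝ)+1)/2^(j+1)))/2 := by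
        intro j
        simpa using odd_term N j
      rw [h0, tsum_congr h1]
      have hs1 := hsum N
      have hs2 : Summable (fun j : ℕ => distNearestInt (((N:ℝ)+1) / 2 ^ (j + 1))) := by
        have := hsum (N+1)
        simpa [Nat.cast_add] using this
      rw [tsum_div_const, Summable.tsum_add hs1 hs2,
        show ((N+1:ℕ):ℝ) = (N:ℝ)+1 from by push_cast; ring]
      ring
    · exact (hsum (2*N+1)).congr hterm
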